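/- The number of multilinear words of length n over an n-letter ordered alphabet (words in which every letter occurs exactly once) that are not m-divisible is at most (m−1)^(2n), where a word is m-divisible if it contains m pairwise disjoint consecutive subwords occurring in strictly decreasing lexicographic order. -/

import Mathlib

/-- A word `W` over an ordered alphabet is `m`-divisible if
`W = v ++ u_1 ++ ⋯ ++ u_m` with the `u_i` nonempty and strictly decreasing
in the lexicographic order. -/
def IsMDivisible {α : Type*} [LT α] (m : ℕ) (W : List α) : Prop :=
  ∃ (v : List α) (us : List (List α)), us.length = m ∧ (∀ u ∈ us, u ≠ []) ∧
    W = v ++ us.flatten ∧ us.Chain' (fun a b => b < a)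

/-- longest strictly decreasing subsequence of `w` ending at index `i`. -/
def lds {α : Type*} [LinearOrder α] (w : ℕ → α) (i : ℕ) : ℕ :=
  (((Finset.range i).filter (fun j => w i < w j)).attach.sup
    (fun j => lds w j.1)) + 1
termination_by i
decreasing_by exact Finset.mem_range.mp (Finset.mem_filter.mp j.2).1

lemma lds_pos {α : Type*} [LinearOrder α] (w : ℕ → α) (i : ℕ) : 1 ≤ lds w i := by
  rw [lds]; omega

lemma lds_lt {α : Type*} [LinearOrder α] (w : ℕ → α) {i j : ℕ} (hij : j < i)
    (h : w i < w j) : lds w j < lds w i := by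
  conv_rhs => rw [lds]
  have hj : j ∈ (Finset.range i).filter (fun j => w i < w j) := by
    simp [hij, h]
  have := Finset.le_sup
    (f := fun j : {x // x ∈ (Finset.range i).filter (fun j => w i < w j)} => lds w j.1)
    (Finset.mem_attach _ ⟨j, hj⟩)
  simp only at this
  omega

lemma lds_chain {α : Type*} [LinearOrder α] (w : ℕ → α) (i : ℕ) :
    ∃ l : List ℕ, l.Chain' (· < ·) ∧ (l.map w).Chain' (fun a b => b < a) ∧
      (∀ j ∈ l, j ≤ i) ∧ l.getLast? = some i ∧ l.length = lds w i := by
  induction i using Nat.strong_induction_on with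
  | _ i ih =>
    rcases eq_or_ne ((Finset.range i).filter (fun j => w i < w j)) ∅ with he | hne
    · refine ⟨[i], List.isChain_singleton _, List.isChain_singleton _, by simp, by simp, ?_⟩
      rw [lds, he]
      simp
    · obtain ⟨j, hj, hsup⟩ := Finset.exists_mem_eq_sup
        ((Finset.range i).filter (fun j => w i < w j)).attach
        (by simpa [Finset.attach_nonempty_iff, Finset.nonempty_iff_ne_empty] using hne)
        (fun j => lds w j.1)
      have hji : j.1 < i := Finset.mem_range.mp (Finset.mem_filter.mp j.2).1
      have hwj : w i < w j.1 := (Finset.mem_filter.mp j.2).2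
      obtain ⟨l, hc1, hc2, hle, hlast, hlen⟩ := ih j.1 hji
      refine ⟨l ++ [i], ?_, ?_, ?_, ?_, ?_⟩
      · rw [List.Chain', List.isChain_append]
        refine ⟨hc1, by simp, ?_⟩
        intro x hx y hy
        simp at hy
        subst hy
        rw [hlast] at hx
        simp at hx
        omega
      · rw [List.map_append, List.Chain', List.isChain_append]
        refine ⟨hc2, by simp, ?_⟩
        intro x hx y hy
        simp at hy
        subst hy
        rw [List.getLast?_map, hlast] at hx
        simp at hx
        subst hx
        exact hwj
      · intro x hx
        rcases List.mem_append.mp hx with h | h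
        · exact le_of_lt (lt_of_le_of_lt (hle x h) hji)
        · simp at h; omega
      · simp
      · rw [List.length_append, hlen]
        conv_rhs => rw [lds]
        rw [← hsup]
        simp

lemma split_lemma {α : Type*} [LinearOrder α] (d : α) (l : List ℕ) :
    ∀ (W : List α) (i : ℕ),
    ((i::l).Chain' (· < ·)) → (∀ j ∈ i::l, j < W.length) →
    (((i::l).map (fun j => W.getD j d)).Chain' (fun a b => b < a)) →
    ∃ us : List (List α), us.length = l.length + 1 ∧ (∀ u ∈ us, u ≠ []) ∧
      us.flatten = W.drop i ∧ us.Chain' (fun a b : List α => b < a) ∧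
      ∃ t, us.head? = some (W.getD i d :: t) := by
  induction l with
  | nil =>
    intro W i _ hlen _
    have hi : i < W.length := hlen i (by simp)
    have hdropi : W.drop i = W.getD i d :: W.drop (i+1) := by
      rw [List.getD_eq_getElem _ _ hi]
      exact List.drop_eq_getElem_cons hi
    refine ⟨[W.drop i], by simp, ?_, by simp, List.isChain_singleton _, ?_⟩
    · intro u hu
      simp at hu
      subst hu
      simp [List.drop_eq_nil_iff]
      omega
    · exact ⟨W.drop (i+1), by rw [List.head?_cons, hdropi]⟩
  | cons i' l' ih =>
    intro W i hchain hlen hvals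
    have hii' : i < i' := (List.isChain_cons_cons.mp hchain).1
    have hi : i < W.length := hlen i (by simp)
    have hi' : i' < W.length := hlen i' (by simp)
    have hdropi : W.drop i = W.getD i d :: W.drop (i+1) := by
      rw [List.getD_eq_getElem _ _ hi]
      exact List.drop_eq_getElem_cons hi
    have hvv : W.getD i' d < W.getD i d := by
      rw [List.map_cons, List.map_cons, List.Chain', List.isChain_cons_cons] at hvals
      exact hvals.1
    obtain ⟨us', hlen', hne', hflat', hchain', t', hhead'⟩ :=
      ih W i' (List.isChain_cons_cons.mp hchain).2
        (fun j hj => hlen j (by simp at hj ⊢; tauto))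
        (by rw [List.map_cons] at hvals; exact (List.isChain_cons_cons.mp hvals).2)
    set u0 : List α := W.getD i d :: ((W.drop (i+1)).take (i' - (i+1))) with hu0
    refine ⟨u0 :: us', by simp [hlen'], ?_, ?_, ?_, ⟨_, rfl⟩⟩
    · intro u hu
      rcases List.mem_cons.mp hu with h | h
      · subst h; simp [hu0]
      · exact hne' u h
    · have hdd : (W.drop (i+1)).drop (i' - (i+1)) = W.drop i' := by
        rw [List.drop_drop]
        congr 1
        omega
      simp only [List.flatten_cons, hflat', hu0, List.cons_append, hdropi]
      rw [← hdd, List.take_append_drop]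
    · rw [List.Chain', List.isChain_cons]
      refine ⟨?_, hchain'⟩
      intro y hy
      rw [hhead'] at hy
      simp only [Option.mem_def, Option.some.injEq] at hy
      subst hy
      exact List.Lex.rel hvv

lemma isMDivisible_of_chain {α : Type*} [LinearOrder α] (W : List α) (d : α)
    (l : List ℕ) (hne : l ≠ []) (hc : l.Chain' (· < ·))
    (hmem : ∀ j ∈ l, j < W.length)
    (hv : (l.map (fun j => W.getD j d)).Chain' (fun a b => b < a)) :
    IsMDivisible l.length W := by
  cases l with
  | nil => exact absurd rfl hne
  | cons i l' =>
    obtain ⟨us, hlen, hne', hflat, hchain, _⟩ := split_lemma d l' W i hc hmem hv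
    exact ⟨W.take i, us, by simpa using hlen, hne',
      by rw [hflat]; exact (List.take_append_drop i W).symm, hchain⟩

lemma lds_lt_of_not_div {α : Type*} [LinearOrder α] (W : List α) (d : α) {m : ℕ}
    (hm : 1 ≤ m) (hdiv : ¬ IsMDivisible m W) {i : ℕ} (hi : i < W.length) :
    lds (fun j => W.getD j d) i < m := by
  by_contra h
  push_neg at h
  obtain ⟨l, hc1, hc2, hle, _, hlen⟩ := lds_chain (fun j => W.getD j d) i
  apply hdiv
  have htk : (l.take m).length = m := by
    rw [List.length_take]
    omega
  rw [← htk]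
  apply isMDivisible_of_chain W d
  · intro hnil
    rw [hnil] at htk
    simp at htk
    omega
  · exact hc1.take m
  · exact fun j hj => lt_of_le_of_lt (hle j (List.take_subset m l hj)) hi
  · rw [List.map_take]
    exact hc2.take m

lemma mem_of_nodup_length {n : ℕ} {W : List (Fin n)} (h1 : W.length = n)
    (h2 : W.Nodup) (v : Fin n) : v ∈ W := by
  have hc := List.toFinset_card_of_nodup h2
  have huniv : W.toFinset = Finset.univ :=
    Finset.eq_univ_of_card _ (by rw [hc, h1, Fintype.card_fin])
  rw [← List.mem_toFinset, huniv]
  exact Finset.mem_univ v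

lemma indexOf_getD {n : ℕ} {W : List (Fin n)} (h2 : W.Nodup) {i : ℕ}
    (hi : i < W.length) (d : Fin n) : W.idxOf (W.getD i d) = i := by
  have hmem : W.getD i d ∈ W := by
    rw [List.getD_eq_getElem _ _ hi]
    exact List.getElem_mem hi
  have hlt := List.idxOf_lt_length_iff.mpr hmem
  have hg : W[W.idxOf (W.getD i d)] = W.getD i d := List.getElem_idxOf hlt
  exact (h2.getElem_inj_iff).mp (by rw [hg, List.getD_eq_getElem _ _ hi])

/-- the key asymmetric step of the injectivity argument. -/
lemma key_step {n : ℕ} (d : Fin n) (W W' : List (Fin n))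
    (hWl : W.length = n) (hW'l : W'.length = n) (hWnd : W.Nodup) (hW'nd : W'.Nodup)
    (hA : ∀ p, p < n → lds (fun j => W.getD j d) p = lds (fun j => W'.getD j d) p)
    (hB : ∀ v : Fin n, lds (fun j => W.getD j d) (W.idxOf v)
        = lds (fun j => W'.getD j d) (W'.idxOf v))
    (i : ℕ) (hi : i < n) (hpre : ∀ j, j < i → W.getD j d = W'.getD j d)
    (hlt : W.getD i d < W'.getD i d) : False := by
  set v := W.getD i d with hv
  have hjmem : v ∈ W' := mem_of_nodup_length hW'l hW'nd v
  set j := W'.idxOf v with hj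
  have hjlen : j < W'.length := List.idxOf_lt_length_iff.mpr hjmem
  have hgj : W'.getD j d = v := by
    rw [List.getD_eq_getElem _ _ hjlen]
    exact List.getElem_idxOf hjlen
  have hji : i < j := by
    rcases lt_trichotomy j i with h | h | h
    · exfalso
      have := hpre j h
      have : W.getD j d = W.getD i d := by rw [this, hgj]
      rw [List.getD_eq_getElem _ _ (by omega : j < W.length),
        List.getD_eq_getElem _ _ (by omega : i < W.length)] at this
      have := (hWnd.getElem_inj_iff).mp this
      omega
    · exfalso
      rw [h] at hgj
      exact absurd hgj (ne_of_gt hlt)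
    · exact h
  -- lds of W' increases from i to j
  have hL : lds (fun j => W'.getD j d) i < lds (fun j => W'.getD j d) j := by
    apply lds_lt _ hji
    rw [hgj]
    exact hlt
  have hidxW : W.idxOf v = i := indexOf_getD hWnd (by omega) d
  have h1 := hB v
  rw [hidxW, ← hj] at h1
  have h2 := hA i hi
  omega

theorem stmt_4 (n m : ℕ) :
    Set.ncard {W : List (Fin n) | W.length = n ∧ W.Nodup ∧ ¬ IsMDivisible m W} ≤
      (m - 1) ^ (2 * n) := by
  set S := {W : List (Fin n) | W.length = n ∧ W.Nodup ∧ ¬ IsMDivisible m W} with hS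
  -- case m = 0 : every word is 0-divisible
  rcases Nat.eq_zero_or_pos m with rfl | hm
  · have hempty : S = ∅ := Set.eq_empty_iff_forall_notMem.mpr
      (fun W hW => hW.2.2 ⟨W, [], rfl, by simp, by simp, List.IsChain.nil⟩)
    rw [hempty, Set.ncard_empty]
    exact Nat.zero_le _
  -- case n = 0
  rcases Nat.eq_zero_or_pos n with rfl | hn
  · have hsub : S ⊆ {([] : List (Fin 0))} := by
      intro W hW
      have := hW.1
      simp only [List.length_eq_zero_iff] at this
      simp [this]
    calc S.ncard ≤ ({([] : List (Fin 0))} : Set (List (Fin 0))).ncard :=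
          Set.ncard_le_ncard hsub (Set.finite_singleton _)
      _ = 1 := Set.ncard_singleton _
      _ ≤ (m - 1) ^ (2 * 0) := by simp
  -- case m = 1 : every nonempty word is 1-divisible
  rcases eq_or_lt_of_le (show 1 ≤ m from hm) with hm1 | hm2
  · have hempty : S = ∅ := by
      apply Set.eq_empty_iff_forall_notMem.mpr
      intro W hW
      apply hW.2.2
      rw [← hm1]
      refine ⟨[], [W], rfl, ?_, by simp, List.isChain_singleton _⟩
      intro u hu
      simp at hu
      subst hu
      intro hnil
      rw [hnil] at hW
      have := hW.1
      simp at this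
      omega
    rw [hempty, Set.ncard_empty]
    exact Nat.zero_le _
  -- main case : m ≥ 2, n ≥ 1
  have hm2' : 2 ≤ m := hm2
  set d : Fin n := ⟨0, hn⟩ with hd
  set F : List (Fin n) → (Fin n → Fin (m-1) × Fin (m-1)) := fun W p =>
    (⟨min (lds (fun j => W.getD j d) p.1 - 1) (m-2), by omega⟩,
     ⟨min (lds (fun j => W.getD j d) (W.idxOf p) - 1) (m-2), by omega⟩) with hF
  have hbound : ∀ W ∈ S, ∀ p : ℕ, p < n → 1 ≤ lds (fun j => W.getD j d) p ∧
      lds (fun j => W.getD j d) p ≤ m - 1 := by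
    intro W hW p hp
    refine ⟨lds_pos _ _, ?_⟩
    have := lds_lt_of_not_div W d hm hW.2.2 (i := p) (by rw [hW.1]; exact hp)
    omega
  have hinj : Set.InjOn F S := by
    intro W hW W' hW' heq
    have hWl := hW.1
    have hWnd := hW.2.1
    have hW'l := hW'.1
    have hW'nd := hW'.2.1
    have hidxlt : ∀ v : Fin n, W.idxOf v < n := by
      intro v
      have := List.idxOf_lt_length_iff.mpr (mem_of_nodup_length hWl hWnd v)
      omega
    have hidxlt' : ∀ v : Fin n, W'.idxOf v < n := by
      intro v
      have := List.idxOf_lt_length_iff.mpr (mem_of_nodup_length hW'l hW'nd v)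
      omega
    have hA : ∀ p, p < n → lds (fun j => W.getD j d) p = lds (fun j => W'.getD j d) p := by
      intro p hp
      have := congrFun heq ⟨p, hp⟩
      have h1 := congrArg (fun x => (x.1 : ℕ)) this
      simp only [hF] at h1
      obtain ⟨hp1, hp2⟩ := hbound W hW p hp
      obtain ⟨hq1, hq2⟩ := hbound W' hW' p hp
      omega
    have hB : ∀ v : Fin n, lds (fun j => W.getD j d) (W.idxOf v)
        = lds (fun j => W'.getD j d) (W'.idxOf v) := by
      intro v
      have := congrFun heq v
      have h1 := congrArg (fun x => (x.2 : ℕ)) this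
      simp only [hF] at h1
      obtain ⟨hp1, hp2⟩ := hbound W hW _ (hidxlt v)
      obtain ⟨hq1, hq2⟩ := hbound W' hW' _ (hidxlt' v)
      omega
    have hgetD : ∀ i, i < n → W.getD i d = W'.getD i d := by
      intro i
      induction i using Nat.strong_induction_on with
      | _ i ih =>
        intro hi
        by_contra hne
        rcases lt_trichotomy (W.getD i d) (W'.getD i d) with h | h | h
        · exact key_step d W W' hWl hW'l hWnd hW'nd hA hB i hi
            (fun j hj => ih j hj (by omega)) h
        · exact hne h
        · exact key_step d W' W hW'l hWl hW'nd hWnd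
            (fun p hp => (hA p hp).symm) (fun v => (hB v).symm) i hi
            (fun j hj => (ih j hj (by omega)).symm) h
    apply List.ext_getElem (by rw [hWl, hW'l])
    intro p h1 h2
    have := hgetD p (by omega)
    rwa [List.getD_eq_getElem _ _ h1, List.getD_eq_getElem _ _ h2] at this
  calc S.ncard ≤ (Set.univ : Set (Fin n → Fin (m-1) × Fin (m-1))).ncard :=
        Set.ncard_le_ncard_of_injOn F (fun a _ => Set.mem_univ _) hinj Set.finite_univ
    _ = (m - 1) ^ (2 * n) := by
        rw [Set.ncard_univ, Nat.card_eq_fintype_card, Fintype.card_fun,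
          Fintype.card_prod, Fintype.card_fin, Fintype.card_fin]
        rw [mul_pow, two_mul, pow_add]
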